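/- For real ω and R : ℝ → ℝ integrable, bounded, nonnegative, and continuous at ω, the diagonal coefficient satisfies lim_{t→∞} γ(ω,ω,t)/t = 2π R(ω), where γ(ω,ω,t) = ∫ℝ [t sinc((ω−Ω)t/2)]² R(Ω) dΩ. -/

import Mathlib

open MeasureTheory Filter

noncomputable def sinc (x : ℝ) : ℝ := if x = 0 then 1 else Real.sin x / x

open Set
open Real hiding sinc measurable_sinc sinc_neg

lemma measurable_sinc : Measurable sinc :=
  Measurable.ite (measurableSet_eq) measurable_const (Real.measurable_sin.div measurable_id)

lemma sinc_neg (x : ℝ) : sinc (-x) = sinc x := by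
  unfold sinc
  rcases eq_or_ne x 0 with rfl | hx
  · simp
  · rw [if_neg (neg_ne_zero.2 hx), if_neg hx, Real.sin_neg, neg_div_neg_eq]

lemma sinc_sq_le_one (x : ℝ) : sinc x ^ 2 ≤ 1 := by
  unfold sinc
  split_ifs with h
  · norm_num
  · rw [div_pow, div_le_one (by positivity)]
    exact Real.sin_sq_le_sq

lemma sinc_sq_bound (x : ℝ) : sinc x ^ 2 ≤ 2 * (1 + x ^ 2)⁻¹ := by
  rcases le_or_gt (x ^ 2) 1 with h | h
  · calc sinc x ^ 2 ≤ 1 := sinc_sq_le_one x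
    _ ≤ 2 * (1 + x ^ 2)⁻¹ := by
        rw [le_mul_inv_iff₀ (by positivity)]
        linarith
  · have hx : x ≠ 0 := by intro h0; rw [h0] at h; norm_num at h
    unfold sinc
    rw [if_neg hx, div_pow]
    have hs : Real.sin x ^ 2 ≤ 1 := Real.sin_sq_le_one x
    rw [div_le_iff₀ (by positivity)]
    have h2 : 2 * (1 + x ^ 2)⁻¹ * x ^ 2 = 2 * x ^ 2 / (1 + x ^ 2) := by
      field_simp
    rw [h2, le_div_iff₀ (by positivity)]
    nlinarith

lemma sinc_sq_integrable : Integrable (fun x : ℝ => sinc x ^ 2) := by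
  refine Integrable.mono' (integrable_inv_one_add_sq.const_mul 2)
    ((measurable_sinc.pow_const 2).aestronglyMeasurable) (Filter.Eventually.of_forall fun x => ?_)
  rw [Real.norm_eq_abs, abs_of_nonneg (sq_nonneg _)]
  exact sinc_sq_bound x

section Laplace

variable {s : ℝ}

private noncomputable def Fl (s x : ℝ) : ℝ :=
  -(Real.exp (-(s * x)) / (2 * s)) +
    Real.exp (-(s * x)) * (s * Real.cos (2 * x) - 2 * Real.sin (2 * x)) / (2 * (s ^ 2 + 4))

lemma Fl_hasDerivAt (hs : 0 < s) (x : ℝ) :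
    HasDerivAt (Fl s) (Real.exp (-(s * x)) * Real.sin x ^ 2) x := by
  have h1 : HasDerivAt (fun x : ℝ => -(s * x)) (-s) x := by
    exact (((hasDerivAt_id x).const_mul s).neg).congr_deriv (by ring)
  have he : HasDerivAt (fun x : ℝ => Real.exp (-(s * x))) (Real.exp (-(s * x)) * -s) x := h1.exp
  have h2 : HasDerivAt (fun x : ℝ => 2 * x) 2 x := by simpa using (hasDerivAt_id x).const_mul 2
  have hcos : HasDerivAt (fun x : ℝ => Real.cos (2 * x)) (-Real.sin (2 * x) * 2) x := h2.cos
  have hsin : HasDerivAt (fun x : ℝ => Real.sin (2 * x)) (Real.cos (2 * x) * 2) x := h2.sin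
  have hD := ((he.div_const (2 * s)).neg).add
    ((he.mul (((hcos.const_mul s)).sub (hsin.const_mul 2))).div_const (2 * (s ^ 2 + 4)))
  refine hD.congr_deriv ?_
  simp only [Pi.sub_apply]
  rw [Real.sin_sq_eq_half_sub]
  have hs' : s ≠ 0 := hs.ne'
  have h4 : s ^ 2 + 4 ≠ 0 := by positivity
  field_simp
  ring

lemma Fl_tendsto (hs : 0 < s) : Tendsto (Fl s) atTop (nhds 0) := by
  have hB : ∀ x : ℝ, ‖Fl s x‖ ≤ (1 / (2 * s) + (s + 2) / (2 * (s ^ 2 + 4))) * Real.exp (-(s * x)) := by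
    intro x
    have e0 : 0 < Real.exp (-(s * x)) := Real.exp_pos _
    have hcos : |Real.cos (2 * x)| ≤ 1 := Real.abs_cos_le_one _
    have hsin : |Real.sin (2 * x)| ≤ 1 := Real.abs_sin_le_one _
    have h4 : (0:ℝ) < 2 * (s ^ 2 + 4) := by positivity
    rw [Real.norm_eq_abs, Fl]
    have habs : |s * Real.cos (2 * x) - 2 * Real.sin (2 * x)| ≤ s + 2 := by
      calc |s * Real.cos (2 * x) - 2 * Real.sin (2 * x)|
          ≤ |s * Real.cos (2 * x)| + |2 * Real.sin (2 * x)| := abs_sub _ _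
        _ ≤ s + 2 := by
            rw [abs_mul, abs_mul, abs_of_pos hs, abs_of_pos (by norm_num : (0:ℝ) < 2)]
            nlinarith
    calc |(-(Real.exp (-(s * x)) / (2 * s)) +
          Real.exp (-(s * x)) * (s * Real.cos (2 * x) - 2 * Real.sin (2 * x)) / (2 * (s ^ 2 + 4)))|
        ≤ |(-(Real.exp (-(s * x)) / (2 * s)))| +
          |Real.exp (-(s * x)) * (s * Real.cos (2 * x) - 2 * Real.sin (2 * x)) / (2 * (s ^ 2 + 4))| :=
          abs_add_le _ _
      _ ≤ (1 / (2 * s) + (s + 2) / (2 * (s ^ 2 + 4))) * Real.exp (-(s * x)) := by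
          have b1 : |(-(Real.exp (-(s * x)) / (2 * s)))| = Real.exp (-(s * x)) / (2 * s) := by
            rw [abs_neg, abs_of_pos (by positivity)]
          have b2 : |Real.exp (-(s * x)) * (s * Real.cos (2 * x) - 2 * Real.sin (2 * x)) /
              (2 * (s ^ 2 + 4))| ≤ Real.exp (-(s * x)) * (s + 2) / (2 * (s ^ 2 + 4)) := by
            rw [abs_div, abs_of_pos h4, abs_mul, abs_of_pos e0]
            gcongr
          rw [b1]
          have hrw : (1 / (2 * s) + (s + 2) / (2 * (s ^ 2 + 4))) * Real.exp (-(s * x)) =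
              Real.exp (-(s * x)) / (2 * s) + Real.exp (-(s * x)) * (s + 2) / (2 * (s ^ 2 + 4)) := by
            ring
          rw [hrw]
          linarith
  have hexp : Tendsto (fun x : ℝ => Real.exp (-(s * x))) atTop (nhds 0) := by
    apply Real.tendsto_exp_atBot.comp
    exact (tendsto_neg_atTop_atBot).comp (tendsto_id.const_mul_atTop hs)
  have := hexp.const_mul (1 / (2 * s) + (s + 2) / (2 * (s ^ 2 + 4)))
  rw [mul_zero] at this
  exact squeeze_zero_norm hB this

lemma laplace_sin_sq (hs : 0 < s) :
    ∫ x in Ioi (0:ℝ), Real.exp (-(s * x)) * Real.sin x ^ 2 = 2 / (s * (s ^ 2 + 4)) := by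
  have h := integral_Ioi_of_hasDerivAt_of_nonneg
    (g := Fl s) (g' := fun x => Real.exp (-(s * x)) * Real.sin x ^ 2) (a := 0)
    (Fl_hasDerivAt hs 0).continuousAt.continuousWithinAt
    (fun x _ => Fl_hasDerivAt hs x)
    (fun x _ => by positivity)
    (Fl_tendsto hs)
  rw [h, Fl]
  have hs' : s ≠ 0 := hs.ne'
  have h4 : s ^ 2 + 4 ≠ 0 := by positivity
  simp only [mul_zero, neg_zero, Real.exp_zero, Real.cos_zero, Real.sin_zero]
  field_simp
  ring

lemma laplace_sin_sq_integrable (hs : 0 < s) :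
    IntegrableOn (fun x => Real.exp (-(s * x)) * Real.sin x ^ 2) (Ioi (0:ℝ)) :=
  integrableOn_Ioi_deriv_of_nonneg
    (Fl_hasDerivAt hs 0).continuousAt.continuousWithinAt
    (fun x _ => Fl_hasDerivAt hs x)
    (fun x _ => by positivity)
    (Fl_tendsto hs)

end Laplace

lemma integral_two_div_sq_add_four : ∫ s in Ioi (0:ℝ), 2 / (s ^ 2 + 4) = Real.pi / 2 := by
  have hcomp := integral_comp_mul_left_Ioi (g := fun u : ℝ => (1 + u ^ 2)⁻¹) (a := 0)
    (b := (1/2 : ℝ)) (by norm_num)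
  have h1 : ∀ s ∈ Ioi (0:ℝ), 2 / (s ^ 2 + 4) = (1/2 : ℝ) * (1 + ((1/2 : ℝ) * s) ^ 2)⁻¹ := by
    intro s _
    have : (1:ℝ) + ((1/2 : ℝ) * s) ^ 2 = (s ^ 2 + 4) / 4 := by ring
    rw [this]
    field_simp
    ring
  rw [setIntegral_congr_fun measurableSet_Ioi h1, MeasureTheory.integral_const_mul, hcomp]
  simp only [mul_zero, integral_Ioi_inv_one_add_sq, Real.arctan_zero, sub_zero, smul_eq_mul]
  norm_num
  ring

lemma inner_s_integral {x : ℝ} (hx : 0 < x) :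
    ∫ s in Ioi (0:ℝ), s * Real.exp (-(x * s)) = 1 / x ^ 2 := by
  have h := Real.integral_rpow_mul_exp_neg_mul_Ioi (a := 2) (r := x) (by norm_num) hx
  have h2 : ∀ t ∈ Ioi (0:ℝ), t ^ ((2:ℝ) - 1) * Real.exp (-(x * t)) = t * Real.exp (-(x * t)) := by
    intro t ht
    norm_num
  rw [setIntegral_congr_fun measurableSet_Ioi h2] at h
  rw [h, Real.Gamma_two, mul_one]
  rw [show ((2:ℝ)) = ((2:ℕ):ℝ) by norm_num, Real.rpow_natCast]
  rw [div_pow, one_pow]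

lemma half_mass : ∫ x in Ioi (0:ℝ), sinc x ^ 2 = Real.pi / 2 := by
  have hcont : Continuous (Function.uncurry fun s x : ℝ => s * Real.exp (-(s * x)) * Real.sin x ^ 2) := by
    apply Continuous.mul
    · exact continuous_fst.mul ((continuous_fst.mul continuous_snd).neg.rexp)
    · exact (Real.continuous_sin.comp continuous_snd).pow 2
  have hmeas : AEStronglyMeasurable
      (Function.uncurry fun s x : ℝ => s * Real.exp (-(s * x)) * Real.sin x ^ 2)
      ((volume.restrict (Ioi 0)).prod (volume.restrict (Ioi 0))) := hcont.aestronglyMeasurable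
  -- the section integral, for s > 0
  have hsection : ∀ s : ℝ, 0 < s →
      (∫ x in Ioi (0:ℝ), s * Real.exp (-(s * x)) * Real.sin x ^ 2) = 2 / (s ^ 2 + 4) := by
    intro s hs
    rw [show (fun x => s * Real.exp (-(s * x)) * Real.sin x ^ 2)
      = fun x => s * (Real.exp (-(s * x)) * Real.sin x ^ 2) by funext x; ring]
    rw [MeasureTheory.integral_const_mul, laplace_sin_sq hs]
    field_simp
  have hint : Integrable
      (Function.uncurry fun s x : ℝ => s * Real.exp (-(s * x)) * Real.sin x ^ 2)
      ((volume.restrict (Ioi 0)).prod (volume.restrict (Ioi 0))) := by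
    rw [integrable_prod_iff hmeas]
    constructor
    · filter_upwards [self_mem_ae_restrict measurableSet_Ioi] with s hs
      have := (laplace_sin_sq_integrable hs).const_mul s
      simpa [mul_assoc] using this
    · apply Integrable.congr (f := fun s : ℝ => 2 / (s ^ 2 + 4))
      · refine Integrable.mono' (integrable_inv_one_add_sq.const_mul 2).restrict
          ((measurable_const.div
            ((measurable_id.pow_const 2).add_const 4)).aestronglyMeasurable)
          (Filter.Eventually.of_forall fun s => ?_)
        rw [Real.norm_eq_abs, abs_of_nonneg (by positivity)]
        rw [div_le_iff₀ (by positivity)]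
        have h2 : 2 * (1 + s ^ 2)⁻¹ * (s ^ 2 + 4) = 2 * ((s ^ 2 + 4) / (1 + s ^ 2)) := by
          field_simp
        rw [h2]
        have h3 : (1:ℝ) ≤ (s ^ 2 + 4) / (1 + s ^ 2) := by
          rw [le_div_iff₀ (by positivity)]
          nlinarith
        nlinarith
      · filter_upwards [self_mem_ae_restrict measurableSet_Ioi] with s hs
        have hnn : ∀ x : ℝ, ‖s * Real.exp (-(s * x)) * Real.sin x ^ 2‖
            = s * Real.exp (-(s * x)) * Real.sin x ^ 2 := by
          intro x
          rw [Real.norm_eq_abs, abs_of_nonneg]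
          have h0 : (0:ℝ) ≤ s := le_of_lt hs
          positivity
        simp only [Function.uncurry_apply_pair, hnn]
        exact (hsection s hs).symm
  have hswap := MeasureTheory.integral_integral_swap
    (f := fun s x : ℝ => s * Real.exp (-(s * x)) * Real.sin x ^ 2)
    (μ := volume.restrict (Ioi 0)) (ν := volume.restrict (Ioi 0)) hint
  have hLHS : (∫ s in Ioi (0:ℝ), ∫ x in Ioi (0:ℝ),
      s * Real.exp (-(s * x)) * Real.sin x ^ 2) = Real.pi / 2 := by
    rw [setIntegral_congr_fun measurableSet_Ioi (fun s hs => hsection s hs)]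
    exact integral_two_div_sq_add_four
  have hRHS : (∫ x in Ioi (0:ℝ), ∫ s in Ioi (0:ℝ),
      s * Real.exp (-(s * x)) * Real.sin x ^ 2) = ∫ x in Ioi (0:ℝ), sinc x ^ 2 := by
    apply setIntegral_congr_fun measurableSet_Ioi
    intro x hx
    have h1 : (∫ s in Ioi (0:ℝ), s * Real.exp (-(s * x)) * Real.sin x ^ 2)
        = Real.sin x ^ 2 * (1 / x ^ 2) := by
      rw [show (fun s : ℝ => s * Real.exp (-(s * x)) * Real.sin x ^ 2)
        = fun s : ℝ => Real.sin x ^ 2 * (s * Real.exp (-(x * s))) by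
          funext s; rw [mul_comm s x]; ring]
      rw [MeasureTheory.integral_const_mul, inner_s_integral hx]
    simp only [h1]
    unfold sinc
    rw [if_neg (ne_of_gt hx), div_pow]
    ring
  rw [← hRHS, ← hswap, hLHS]

lemma full_mass : ∫ x : ℝ, sinc x ^ 2 = Real.pi := by
  have hIic : ∫ x in Iic (0:ℝ), sinc x ^ 2 = Real.pi / 2 := by
    have := integral_comp_neg_Ioi (c := (0:ℝ)) (f := fun x => sinc x ^ 2)
    simp only [neg_zero] at this
    rw [← this]
    rw [← half_mass]
    apply setIntegral_congr_fun measurableSet_Ioi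
    intro x _
    simp [sinc_neg]
  have hsplit := MeasureTheory.integral_add_compl (measurableSet_Iic (a := (0:ℝ)))
    sinc_sq_integrable
  rw [compl_Iic] at hsplit
  rw [← hsplit, hIic, half_mass]
  ring

lemma window_mass (ω : ℝ) :
    Tendsto (fun t : ℝ => ∫ Ω in Icc (ω - 1) (ω + 1),
        (t * sinc ((ω - Ω) * t / 2)) ^ 2 / (2 * Real.pi * t)) atTop (nhds 1) := by
  have hb : Tendsto (fun t : ℝ => t / 2) atTop atTop :=
    tendsto_id.atTop_div_const two_pos
  have ha : Tendsto (fun t : ℝ => -(t / 2)) atTop atBot := tendsto_neg_atTop_atBot.comp hb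
  have hlim := (MeasureTheory.intervalIntegral_tendsto_integral sinc_sq_integrable ha hb).const_mul
    (Real.pi)⁻¹
  rw [full_mass, inv_mul_cancel₀ Real.pi_ne_zero] at hlim
  apply hlim.congr'
  filter_upwards [eventually_gt_atTop 0] with t ht
  have hπ := Real.pi_pos
  rw [integral_Icc_eq_integral_Ioc, ← intervalIntegral.integral_of_le (by linarith)]
  rw [intervalIntegral.integral_comp_sub_left
    (fun u => (t * sinc (u * t / 2)) ^ 2 / (2 * Real.pi * t)) ω]
  rw [show ω - (ω + 1) = -1 by ring, show ω - (ω - 1) = 1 by ring]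
  simp only [mul_div_assoc]
  rw [intervalIntegral.integral_comp_mul_right
    (fun v => (t * sinc v) ^ 2 / (2 * Real.pi * t)) (ne_of_gt (by linarith : (0:ℝ) < t / 2))]
  have hpt : ∀ v : ℝ, (t * sinc v) ^ 2 / (2 * Real.pi * t) = t / (2 * Real.pi) * sinc v ^ 2 := by
    intro v
    field_simp
  simp only [hpt]
  rw [intervalIntegral.integral_const_mul]
  rw [show (-1:ℝ) * (t / 2) = -(t / 2) by ring, show (1:ℝ) * (t / 2) = t / 2 by ring,
    smul_eq_mul]
  rw [← mul_assoc]
  congr 1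
  field_simp

theorem diagonal_rate_tendsto_markovian (ω : ℝ)
    (R : ℝ → ℝ) (hR : Integrable R) (hbd : ∃ C : ℝ, ∀ x, |R x| ≤ C)
    (hnn : ∀ x, 0 ≤ R x) (hc : ContinuousAt R ω) :
    Tendsto (fun t : ℝ =>
        (∫ Ω : ℝ, (t * sinc ((ω - Ω) * t / 2)) ^ 2 * R Ω) / t)
      atTop (nhds (2 * Real.pi * R ω)) := by
  have hπ := Real.pi_pos
  set φ : ℝ → ℝ → ℝ := fun t Ω => (t * sinc ((ω - Ω) * t / 2)) ^ 2 / (2 * Real.pi * t) with hφ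
  have hnφ : ∀ᶠ t in atTop, ∀ x, 0 ≤ φ t x := by
    filter_upwards [eventually_gt_atTop 0] with t ht x
    exact div_nonneg (sq_nonneg _) (mul_nonneg (by positivity) ht.le)
  have hlφ : ∀ u : Set ℝ, IsOpen u → ω ∈ u → TendstoUniformlyOn φ 0 atTop uᶜ := by
    intro u hu hωu
    obtain ⟨δ, hδ, hball⟩ := Metric.isOpen_iff.1 hu ω hωu
    rw [Metric.tendstoUniformlyOn_iff]
    intro ε hε
    filter_upwards [eventually_gt_atTop (max 0 (2 / (Real.pi * δ ^ 2 * ε)))] with t ht Ω hΩ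
    have ht0 : 0 < t := lt_of_le_of_lt (le_max_left _ _) ht
    have ht2 : 2 / (Real.pi * δ ^ 2 * ε) < t := lt_of_le_of_lt (le_max_right _ _) ht
    have hΩδ : δ ≤ |ω - Ω| := by
      by_contra h
      push_neg at h
      exact hΩ (hball (by rwa [Metric.mem_ball, Real.dist_eq, abs_sub_comm]))
    have hne : ω - Ω ≠ 0 := by
      intro h0
      rw [h0, abs_zero] at hΩδ
      linarith
    have hv : (ω - Ω) * t / 2 ≠ 0 := div_ne_zero (mul_ne_zero hne ht0.ne') two_ne_zero
    have hval : φ t Ω = 2 * Real.sin ((ω - Ω) * t / 2) ^ 2 / (Real.pi * t * (ω - Ω) ^ 2) := by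
      rw [hφ]
      simp only
      rw [sinc, if_neg hv]
      field_simp
    have hb1 : φ t Ω ≤ 2 / (Real.pi * t * δ ^ 2) := by
      rw [hval]
      have hsq : δ ^ 2 ≤ (ω - Ω) ^ 2 := by
        rw [← sq_abs (ω - Ω)]
        exact pow_le_pow_left₀ hδ.le hΩδ 2
      have hs1 : Real.sin ((ω - Ω) * t / 2) ^ 2 ≤ 1 := Real.sin_sq_le_one _
      calc 2 * Real.sin ((ω - Ω) * t / 2) ^ 2 / (Real.pi * t * (ω - Ω) ^ 2)
          ≤ 2 * 1 / (Real.pi * t * δ ^ 2) := by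
            gcongr
          _ = 2 / (Real.pi * t * δ ^ 2) := by ring
    have hb2 : 2 / (Real.pi * t * δ ^ 2) < ε := by
      rw [div_lt_iff₀ (by positivity)]
      rw [div_lt_iff₀ (by positivity)] at ht2
      nlinarith
    rw [Real.dist_eq]
    have h0 : 0 ≤ φ t Ω := div_nonneg (sq_nonneg _) (mul_nonneg (by positivity) ht0.le)
    rw [Pi.zero_apply, abs_sub_comm, sub_zero, abs_of_nonneg h0]
    exact lt_of_le_of_lt hb1 hb2
  have hiφ : Tendsto (fun t : ℝ => ∫ Ω in Icc (ω - 1) (ω + 1), φ t Ω) atTop (nhds 1) :=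
    window_mass ω
  have h'iφ : ∀ᶠ t in atTop, AEStronglyMeasurable (φ t) (volume : Measure ℝ) := by
    apply Filter.Eventually.of_forall
    intro t
    have m1 : Measurable fun Ω : ℝ => (ω - Ω) * t / 2 :=
      ((measurable_const.sub measurable_id).mul_const t).div_const 2
    exact ((((measurable_sinc.comp m1).const_mul t).pow_const 2).div_const
      (2 * Real.pi * t)).aestronglyMeasurable
  have key := tendsto_integral_peak_smul_of_integrable_of_tendsto (μ := volume) (x₀ := ω)
    (t := Icc (ω - 1) (ω + 1)) measurableSet_Icc
    (Icc_mem_nhds (by linarith) (by linarith))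
    (by rw [Real.volume_Icc]; exact ENNReal.ofReal_ne_top) hnφ hlφ hiφ h'iφ hR hc
  have key2 := key.const_mul (2 * Real.pi)
  apply key2.congr'
  filter_upwards [eventually_gt_atTop 0] with t ht
  have hpt : ∀ Ω : ℝ, φ t Ω • R Ω
      = ((t * sinc ((ω - Ω) * t / 2)) ^ 2 * R Ω) / (2 * Real.pi * t) := by
    intro Ω
    rw [smul_eq_mul, hφ]
    ring
  simp only [hpt]
  rw [MeasureTheory.integral_div]
  field_simp
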